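/- If Γ satisfies the Riccati equations Γ_x = 2iλΓ - ū - uΓ² and Γ_t = -2λū + iū_x + 2(2iλ² - i|u|²)Γ - (2λu + iu_x)Γ², and u satisfies iu_t + u_xx + 2u|u|² = 0, then the conservation law ∂_t(uΓ) = ∂_x(i|u|² + (2λu + iu_x)Γ) holds. -/

import Mathlib

open Complex

/-- if `Γ` satisfies both Riccati equations of the NLS Lax pair and `u`
satisfies NLS, then the conservation law `∂_t(uΓ) = ∂_x(i|u|² + (2λu + iu_x)Γ)` holds. -/
theorem stmt_2 (lam : ℂ) (u ut ux uxx Γ Γx Γt : ℝ → ℝ → ℂ)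
    (hut : ∀ x t, HasDerivAt (fun s => u x s) (ut x t) t)
    (hux : ∀ x t, HasDerivAt (fun y => u y t) (ux x t) x)
    (huxx : ∀ x t, HasDerivAt (fun y => ux y t) (uxx x t) x)
    (hΓx : ∀ x t, HasDerivAt (fun y => Γ y t) (Γx x t) x)
    (hΓt : ∀ x t, HasDerivAt (fun s => Γ x s) (Γt x t) t)
    -- the x-part Riccati equation
    (hricx : ∀ x t, Γx x t = 2 * Complex.I * lam * Γ x t - (starRingEnd ℂ) (u x t)
      - u x t * (Γ x t) ^ 2)
    -- the t-part Riccati equation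
    (hrict : ∀ x t, Γt x t = -2 * lam * (starRingEnd ℂ) (u x t)
      + Complex.I * (starRingEnd ℂ) (ux x t)
      + 2 * (2 * Complex.I * lam ^ 2 - Complex.I * (u x t * (starRingEnd ℂ) (u x t))) * Γ x t
      - (2 * lam * u x t + Complex.I * ux x t) * (Γ x t) ^ 2)
    -- the NLS equation
    (hNLS : ∀ x t, Complex.I * ut x t + uxx x t
      + 2 * u x t * (u x t * (starRingEnd ℂ) (u x t)) = 0) :
    ∀ x t,
      deriv (fun s => u x s * Γ x s) t
        = deriv (fun y => Complex.I * (u y t * (starRingEnd ℂ) (u y t))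
            + (2 * lam * u y t + Complex.I * ux y t) * Γ y t) x := by

  intro x t
  have hconj : HasDerivAt (fun y => (starRingEnd ℂ) (u y t)) ((starRingEnd ℂ) (ux x t)) x :=
    Complex.conjCLE.hasFDerivAt.comp_hasDerivAt x (hux x t)
  have hL : deriv (fun s => u x s * Γ x s) t = _ := ((hut x t).mul (hΓt x t)).deriv
  have hR : deriv (fun y => Complex.I * (u y t * (starRingEnd ℂ) (u y t))
      + (2 * lam * u y t + Complex.I * ux y t) * Γ y t) x
      = Complex.I * (ux x t * (starRingEnd ℂ) (u x t) + u x t * (starRingEnd ℂ) (ux x t))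
        + ((2 * lam * ux x t + Complex.I * uxx x t) * Γ x t
          + (2 * lam * u x t + Complex.I * ux x t) * Γx x t) := ((((hux x t).mul hconj).const_mul Complex.I).add
    ((((hux x t).const_mul (2 * lam)).add ((huxx x t).const_mul Complex.I)).mul
      (hΓx x t))).deriv
  rw [hL, hR, hricx, hrict]
  linear_combination (-Complex.I * Γ x t) * hNLS x t + (ut x t * Γ x t - 2 * lam * ux x t * Γ x t) * Complex.I_sq
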